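/- Let p ∈ C be an elliptic m-fold point on a reduced curve C over an algebraically closed field k, with normalization π: C̃ → C at p and preimages p₁,…,p_m. Assume char k ≠ 2,3 if m = 1 and char k ≠ 2 if m = 2. Then a regular vector field ⊕_i f_i(t_i) d/dt_i on C̃ (in suitable formal coordinates t_i at p_i), with f_i = a_{i0} + a_{i1} t_i + (higher order), descends to a regular vector field on C if and only if a_{10} = ⋯ = a_{m0} = 0 and a_{11} = a_{21} = ⋯ = a_{m1}. -/

import Mathlib

set_option synthInstance.maxHeartbeats 1000000
set_option maxHeartbeats 1000000

/-- The complete local ring of the elliptic `m`-fold point inside its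
normalization `k[[t₁]] × ⋯ × k[[t_m]]`. -/
noncomputable def ellipticSubalgebra (k : Type) [Field k] (m : ℕ) :
    Subalgebra k (Fin m → PowerSeries k) :=
  Algebra.adjoin k
    ({g : Fin m → PowerSeries k | ∃ i : Fin (m - 1),
        g = fun j : Fin m =>
          if (j : ℕ) = (i : ℕ) ∨ (j : ℕ) = m - 1 then PowerSeries.X else 0}
      ∪ {g : Fin m → PowerSeries k |
          ∀ j : Fin m, g j ∈ (Ideal.span {PowerSeries.X}) ^ 2})


open PowerSeries

private noncomputable def Rsub (k : Type) [Field k] (n : ℕ) :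
    Subalgebra k (Fin (n + 1) → PowerSeries k) where
  carrier := {f | (∀ i j : Fin (n + 1),
      constantCoeff (f i) = constantCoeff (f j)) ∧
      coeff 1 (f (Fin.last n)) = ∑ i : Fin n, coeff 1 (f i.castSucc)}
  mul_mem' := by
    rintro f g ⟨hf0, hf1⟩ ⟨hg0, hg1⟩
    refine ⟨fun i j => by simp only [Pi.mul_apply, map_mul, hf0 i j, hg0 i j], ?_⟩
    have key : ∀ i : Fin (n + 1), coeff 1 ((f * g) i) =
        coeff 1 (f i) * constantCoeff (g (Fin.last n))
          + coeff 1 (g i) * constantCoeff (f (Fin.last n)) := by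
      intro i
      rw [Pi.mul_apply, coeff_one_mul, hg0 i (Fin.last n), hf0 i (Fin.last n)]
    simp only [key]
    rw [hf1, hg1, Finset.sum_add_distrib, Finset.sum_mul, Finset.sum_mul]
  one_mem' := by
    refine ⟨fun i j => rfl, ?_⟩
    simp
  add_mem' := by
    rintro f g ⟨hf0, hf1⟩ ⟨hg0, hg1⟩
    refine ⟨fun i j => by simp only [Pi.add_apply, map_add, hf0 i j, hg0 i j], ?_⟩
    simp only [Pi.add_apply, map_add, hf1, hg1, Finset.sum_add_distrib]
  algebraMap_mem' := by
    intro c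
    refine ⟨fun i j => rfl, ?_⟩
    simp [Pi.algebraMap_apply, PowerSeries.algebraMap_apply, coeff_C]

private lemma sq_mem (k : Type) [Field k] (p : PowerSeries k)
    (hp : p ∈ (Ideal.span {(X : PowerSeries k)}) ^ 2) :
    constantCoeff p = 0 ∧ coeff 1 p = 0 := by
  rw [Ideal.span_singleton_pow, Ideal.mem_span_singleton, X_pow_dvd_iff] at hp
  exact ⟨by rw [← coeff_zero_eq_constantCoeff]; exact hp 0 (by norm_num),
    hp 1 (by norm_num)⟩

private lemma elliptic_le_Rsub (k : Type) [Field k] (n : ℕ) :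
    ellipticSubalgebra k (n + 1) ≤ Rsub k n := by
  apply Algebra.adjoin_le
  rintro g (⟨i, rfl⟩ | hg)
  · constructor
    · intro u v
      simp only [apply_ite (constantCoeff), constantCoeff_X, map_zero, ite_self]
    · simp only [Nat.add_sub_cancel]
      rw [if_pos (Or.inr (by simp : ((Fin.last n : Fin (n+1)) : ℕ) = n))]
      have hi : (i : ℕ) < n := i.isLt
      have hcond : ∀ i' : Fin n,
          (if ((i'.castSucc : Fin (n+1)) : ℕ) = (i : ℕ) ∨ ((i'.castSucc : Fin (n+1)) : ℕ) = n
              then (X : PowerSeries k) else 0)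
            = (if i' = ⟨(i : ℕ), hi⟩ then X else 0) := by
        intro i'
        congr 1
        simp only [Fin.coe_castSucc, eq_iff_iff, Fin.ext_iff]
        constructor
        · rintro (h | h)
          · exact h
          · exact absurd h (Nat.ne_of_lt i'.isLt)
        · exact fun h => Or.inl h
      simp only [hcond, apply_ite (coeff 1), coeff_one_X, map_zero,
        Finset.sum_ite_eq', Finset.mem_univ, if_true]
  · constructor
    · intro u v
      rw [(sq_mem k _ (hg u)).1, (sq_mem k _ (hg v)).1]
    · simp [(sq_mem k _ (hg _)).2]

private lemma Rsub_le_elliptic (k : Type) [Field k] (n : ℕ)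
    (f : Fin (n + 1) → PowerSeries k) (hf : f ∈ Rsub k n) :
    f ∈ ellipticSubalgebra k (n + 1) := by
  obtain ⟨hf0, hf1⟩ := hf
  set α := constantCoeff (f (Fin.last n)) with hα
  set c : Fin n → k := fun i => coeff 1 (f i.castSucc) with hc
  set G : Fin n → (Fin (n + 1) → PowerSeries k) := fun i j =>
    if (j : ℕ) = (i : ℕ) ∨ (j : ℕ) = n then X else 0 with hGdef
  have hG : ∀ i : Fin n, G i ∈ ellipticSubalgebra k (n + 1) := by
    intro i
    apply Algebra.subset_adjoin
    left
    exact ⟨⟨(i : ℕ), i.isLt⟩, rfl⟩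
  set h : Fin (n + 1) → PowerSeries k :=
    f - algebraMap k _ α - ∑ i : Fin n, c i • G i with hh
  have hmem : h ∈ ellipticSubalgebra k (n + 1) := by
    apply Algebra.subset_adjoin
    right
    intro j
    rw [Ideal.span_singleton_pow, Ideal.mem_span_singleton, X_pow_dvd_iff]
    intro d hd
    have hGc : ∀ (d : ℕ) (i : Fin n), coeff d (G i j) =
        if ((j : ℕ) = (i : ℕ) ∨ (j : ℕ) = n) then coeff d X else 0 := by
      intro d i
      rw [hGdef]
      split <;> simp_all
    have halg : coeff d ((algebraMap k (Fin (n + 1) → PowerSeries k) α) j)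
        = if d = 0 then α else 0 := by
      rw [Pi.algebraMap_apply, PowerSeries.algebraMap_apply]
      split <;> simp_all [coeff_C]
    interval_cases d
    · simp only [hh, Pi.sub_apply, Finset.sum_apply, Pi.smul_apply, map_sub, map_sum,
        map_smul, halg, hGc, if_true, coeff_zero_X, smul_ite, smul_zero, ite_self,
        Finset.sum_const_zero, coeff_zero_eq_constantCoeff]
      rw [hf0 j (Fin.last n)]
      simp [hα]
    · simp only [hh, Pi.sub_apply, Finset.sum_apply, Pi.smul_apply, map_sub, map_sum,
        map_smul, halg, hGc, coeff_one_X, smul_ite, smul_zero, smul_eq_mul, mul_one]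
      norm_num
      by_cases hj : (j : ℕ) = n
      · have hj' : j = Fin.last n := Fin.ext hj
        have : ∀ i : Fin n, (if ((j : ℕ) = (i : ℕ) ∨ (j : ℕ) = n) then c i else 0) = c i := by
          intro i; rw [if_pos (Or.inr hj)]
        rw [Finset.sum_congr rfl fun i _ => this i, hj', hf1, sub_self]
      · have hjlt : (j : ℕ) < n := Nat.lt_of_le_of_ne (Nat.lt_succ_iff.mp j.isLt) hj
        have : ∀ i : Fin n, (if ((j : ℕ) = (i : ℕ) ∨ (j : ℕ) = n) then c i else 0)
            = if (⟨(j : ℕ), hjlt⟩ : Fin n) = i then c i else 0 := by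
          intro i
          congr 1
          simp only [eq_iff_iff, Fin.ext_iff]
          exact ⟨fun h => h.resolve_right hj, fun h => Or.inl h⟩
        rw [Finset.sum_congr rfl fun i _ => this i, Finset.sum_ite_eq Finset.univ]
        simp only [Finset.mem_univ, if_true, hc]
        have hcast : (⟨(j : ℕ), hjlt⟩ : Fin n).castSucc = j := Fin.ext rfl
        rw [hcast, sub_self]
  have hfe : f = algebraMap k (Fin (n + 1) → PowerSeries k) α
      + ∑ i : Fin n, c i • G i + h := by
    rw [hh]; abel
  rw [hfe]
  exact add_mem (add_mem (Subalgebra.algebraMap_mem _ _)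
    (Subalgebra.sum_mem _ fun i _ => Subalgebra.smul_mem _ (hG i) (c i))) hmem

private lemma key_lemma (k : Type) [Field k] (n : ℕ) (f : Fin (n + 1) → PowerSeries k)
    (H : ∀ g ∈ ellipticSubalgebra k (n + 1),
        (fun i : Fin (n + 1) => f i * PowerSeries.derivative k (g i))
          ∈ ellipticSubalgebra k (n + 1))
    (g₁ g₂ : Fin (n + 1) → k)
    (hg₁ : g₁ (Fin.last n) = ∑ i : Fin n, g₁ i.castSucc) :
    (∀ i j : Fin (n + 1),
        constantCoeff (f i) * g₁ i = constantCoeff (f j) * g₁ j) ∧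
    (coeff 1 (f (Fin.last n)) * g₁ (Fin.last n)
        + (g₂ (Fin.last n) * 2) * constantCoeff (f (Fin.last n)) =
      ∑ i : Fin n, (coeff 1 (f i.castSucc) * g₁ i.castSucc
        + (g₂ i.castSucc * 2) * constantCoeff (f i.castSucc))) := by
  set G : Fin (n + 1) → PowerSeries k :=
    fun i => C (g₁ i) * X + C (g₂ i) * X ^ 2 with hG
  have hc0 : ∀ i, constantCoeff (G i) = 0 := by
    intro i; simp [hG, ← coeff_zero_eq_constantCoeff, coeff_C_mul, coeff_X, coeff_X_pow]
  have hc1 : ∀ i, coeff 1 (G i) = g₁ i := by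
    intro i; simp [hG, coeff_C_mul, coeff_X, coeff_X_pow]
  have hc2 : ∀ i, coeff 2 (G i) = g₂ i := by
    intro i; simp [hG, coeff_C_mul, coeff_X, coeff_X_pow]
  have hGmem : G ∈ ellipticSubalgebra k (n + 1) := by
    apply Rsub_le_elliptic
    refine ⟨fun i j => by rw [hc0 i, hc0 j], ?_⟩
    simp only [hc1]
    exact hg₁
  have hD := elliptic_le_Rsub k n (H G hGmem)
  obtain ⟨hD0, hD1⟩ := hD
  have e0 : ∀ i, constantCoeff (f i * PowerSeries.derivative k (G i))
      = constantCoeff (f i) * g₁ i := by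
    intro i
    rw [map_mul]
    congr 1
    rw [← coeff_zero_eq_constantCoeff, coeff_derivative, hc1]
    norm_num
  have e1 : ∀ i, coeff 1 (f i * PowerSeries.derivative k (G i))
      = coeff 1 (f i) * g₁ i + (g₂ i * 2) * constantCoeff (f i) := by
    intro i
    rw [coeff_one_mul, coeff_derivative, ← coeff_zero_eq_constantCoeff, coeff_derivative,
      hc1, hc2]
    norm_num
  constructor
  · intro i j
    have := hD0 i j
    rwa [e0 i, e0 j] at this
  · have := hD1
    simp only [e1] at this
    exact this

private def Pg (k : Type) [Field k] (n : ℕ) (u' : Fin n) : Fin (n + 1) → k :=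
  Pi.single u'.castSucc 1 + Pi.single (Fin.last n) 1

private lemma Pg_last (k : Type) [Field k] (n : ℕ) (u' : Fin n) :
    Pg k n u' (Fin.last n) = 1 := by
  simp only [Pg, Pi.add_apply]
  rw [Pi.single_eq_of_ne (Fin.castSucc_lt_last u').ne', Pi.single_eq_same, zero_add]

private lemma Pg_cast (k : Type) [Field k] (n : ℕ) (u' i : Fin n) :
    Pg k n u' i.castSucc = if i = u' then 1 else 0 := by
  simp only [Pg, Pi.add_apply]
  rw [Pi.single_eq_of_ne (Fin.castSucc_lt_last i).ne, add_zero]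
  rcases eq_or_ne i u' with rfl | h
  · rw [Pi.single_eq_same, if_pos rfl]
  · rw [Pi.single_eq_of_ne (fun hc => h (Fin.castSucc_inj.mp hc)), if_neg h]

private lemma Pg_cond (k : Type) [Field k] (n : ℕ) (u' : Fin n) :
    Pg k n u' (Fin.last n) = ∑ i : Fin n, Pg k n u' i.castSucc := by
  rw [Pg_last]
  simp only [Pg_cast]
  rw [Finset.sum_ite_eq' Finset.univ u' (fun _ => (1 : k))]
  simp


/-- Let `p ∈ C` be an elliptic `m`-fold point, whose complete local ring `R`
sits inside the normalization `R̃ = k[[t₁]] × ⋯ × k[[t_m]]` in the standard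
coordinates (†).  Assume `char k ≠ 2, 3` if `m = 1` and `char k ≠ 2` if
`m = 2`.  A regular vector field `⊕ᵢ fᵢ(tᵢ) d/dtᵢ` on the normalization
(`fᵢ = a_{i0} + a_{i1} tᵢ + …`) descends to a regular vector field on `C`
— i.e. the corresponding derivation maps `R` into `R` — if and only if
`a_{10} = ⋯ = a_{m0} = 0` and `a_{11} = a_{21} = ⋯ = a_{m1}`. -/
theorem stmt11 (k : Type) [Field k] [IsAlgClosed k] (m : ℕ) (hm : 1 ≤ m)
    (hchar1 : m = 1 → (ringChar k ≠ 2 ∧ ringChar k ≠ 3))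
    (hchar2 : m = 2 → ringChar k ≠ 2)
    (f : Fin m → PowerSeries k) :
    (∀ g ∈ ellipticSubalgebra k m,
        (fun i : Fin m => f i * PowerSeries.derivative k (g i))
          ∈ ellipticSubalgebra k m)
      ↔ ((∀ i : Fin m, PowerSeries.coeff 0 (f i) = 0)
          ∧ (∀ i j : Fin m,
              PowerSeries.coeff 1 (f i) = PowerSeries.coeff 1 (f j))) := by
  obtain ⟨n, rfl⟩ : ∃ n, m = n + 1 := ⟨m - 1, (Nat.succ_pred_eq_of_pos hm).symm⟩
  constructor
  · intro H
    have h2a : ∀ j : Fin (n + 1), constantCoeff (f j) * 2 = 0 := by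
      intro j
      have hk := (key_lemma k n f H 0 (Pi.single j 1) (by simp)).2
      simp only [Pi.zero_apply, mul_zero, zero_add, zero_mul, add_zero] at hk
      induction j using Fin.lastCases with
      | last =>
        have hz : ∀ i : Fin n,
            Pi.single (M := fun _ : Fin (n + 1) => k) (Fin.last n) 1 i.castSucc = 0 :=
          fun i => Pi.single_eq_of_ne (Fin.castSucc_lt_last i).ne _
        rw [Pi.single_eq_same] at hk
        simp only [hz, zero_mul] at hk
        simp only [Finset.sum_const_zero] at hk
        linear_combination hk
      | cast j' =>
        rw [Pi.single_eq_of_ne (Fin.castSucc_lt_last j').ne' ] at hk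
        simp only [zero_mul] at hk
        have hsum : ∑ i : Fin n,
            (Pi.single (M := fun _ : Fin (n + 1) => k) j'.castSucc 1 i.castSucc * 2)
              * constantCoeff (f i.castSucc)
            = (Pi.single (M := fun _ : Fin (n + 1) => k) j'.castSucc 1 j'.castSucc * 2)
              * constantCoeff (f j'.castSucc) := by
          refine Finset.sum_eq_single j' (fun i _ hij => ?_)
            (fun h => absurd (Finset.mem_univ _) h)
          rw [Pi.single_eq_of_ne (fun hc => hij (Fin.castSucc_inj.mp hc))]
          ring
        rw [hsum, Pi.single_eq_same] at hk
        linear_combination -hk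
    have ha : ∀ i, constantCoeff (f i) = 0 := by
      by_cases h2 : (2 : k) = 0
      · have hchar : ringChar k = 2 :=
          CharP.ringChar_of_prime_eq_zero Nat.prime_two (by exact_mod_cast h2)
        have hn2 : 2 ≤ n := by
          by_contra hlt
          push_neg at hlt
          interval_cases n
          · exact (hchar1 rfl).1 hchar
          · exact hchar2 rfl hchar
        have hcast0 : ∀ u' : Fin n, constantCoeff (f u'.castSucc) = 0 ∧
            constantCoeff (f (Fin.last n)) = 0 := by
          intro u'
          have : Nontrivial (Fin n) := Fin.nontrivial_iff_two_le.mpr hn2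
          obtain ⟨w', hw'⟩ := exists_ne u'
          have hk := (key_lemma k n f H (Pg k n u') 0 (Pg_cond k n u')).1
          have h1 := hk u'.castSucc w'.castSucc
          have h2' := hk (Fin.last n) w'.castSucc
          rw [Pg_cast, Pg_cast, if_pos rfl, if_neg hw', mul_zero, mul_one] at h1
          rw [Pg_last, Pg_cast, if_neg hw', mul_zero, mul_one] at h2'
          exact ⟨h1, h2'⟩
        intro i
        induction i using Fin.lastCases with
        | last => exact (hcast0 ⟨0, by omega⟩).2
        | cast u' => exact (hcast0 u').1
      · intro i
        rcases mul_eq_zero.mp (h2a i) with h | h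
        · exact h
        · exact absurd h h2
    have hb : ∀ i, coeff 1 (f i) = coeff 1 (f (Fin.last n)) := by
      intro i
      induction i using Fin.lastCases with
      | last => rfl
      | cast u' =>
        have hk := (key_lemma k n f H (Pg k n u') 0 (Pg_cond k n u')).2
        simp only [ha, mul_zero, zero_mul, add_zero, Pi.zero_apply] at hk
        rw [Pg_last, mul_one] at hk
        simp only [Pg_cast, mul_ite, mul_one, mul_zero, Finset.sum_ite_eq',
          Finset.mem_univ, if_true] at hk
        exact hk.symm
    refine ⟨fun i => ?_, fun i j => (hb i).trans (hb j).symm⟩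
    rw [coeff_zero_eq_constantCoeff]
    exact ha i
  · rintro ⟨ha, hb⟩ g hg
    obtain ⟨hg0, hg1⟩ := elliptic_le_Rsub k n hg
    apply Rsub_le_elliptic
    have ha' : ∀ i, constantCoeff (f i) = 0 := by
      intro i
      rw [← coeff_zero_eq_constantCoeff]
      exact ha i
    constructor
    · intro i j
      simp [map_mul, ha']
    · have e1 : ∀ i, coeff 1 (f i * PowerSeries.derivative k (g i))
          = coeff 1 (f i) * coeff 1 (g i) := by
        intro i
        rw [coeff_one_mul, ha' i, mul_zero, add_zero, ← coeff_zero_eq_constantCoeff,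
          coeff_derivative]
        norm_num
      simp only [e1]
      rw [hg1, Finset.mul_sum]
      exact Finset.sum_congr rfl fun i _ => by rw [hb i.castSucc (Fin.last n)]
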